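/- Let R be a right artinian ring that is not semisimple and whose right i-profile is linearly ordered. Then for every right R-module K that is not i-poor, there exists a cyclic right R-module C whose injectivity domain is strictly contained in the injectivity domain of K. -/

import Mathlib

universe u

/-- `M` is `N`-injective. -/
def ModInj (A : Type u) [Ring A] (M : Type u) [AddCommGroup M] [Module A M]
    (N : Type u) [AddCommGroup N] [Module A N] : Prop :=
  ∀ (K : Submodule A N) (f : K →ₗ[A] M), ∃ g : N →ₗ[A] M, ∀ x : K, g x = f x

/-- The right i-profile of `R` is linearly ordered. -/
def IProfileLinear (R : Type u) [Ring R] : Prop :=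
  ∀ (M N : Type u) [AddCommGroup M] [Module Rᵐᵒᵖ M] [AddCommGroup N] [Module Rᵐᵒᵖ N],
    (∀ (X : Type u) [AddCommGroup X] [Module Rᵐᵒᵖ X],
      ModInj Rᵐᵒᵖ M X → ModInj Rᵐᵒᵖ N X) ∨
    (∀ (X : Type u) [AddCommGroup X] [Module Rᵐᵒᵖ X],
      ModInj Rᵐᵒᵖ N X → ModInj Rᵐᵒᵖ M X)

section aux

variable {A : Type u} [Ring A]

/-- Every module is injective relative to any semisimple module. -/
lemma modInj_of_semisimple (M N : Type u) [AddCommGroup M] [Module A M]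
    [AddCommGroup N] [Module A N] [IsSemisimpleModule A N] : ModInj A M N := by
  intro K f
  obtain ⟨q, hq⟩ := exists_isCompl K
  refine ⟨f ∘ₗ (K.projectionOnto q hq), fun x => ?_⟩
  simp

/-- Injectivity domains are closed under submodules. -/
lemma modInj_submodule {M N : Type u} [AddCommGroup M] [Module A M]
    [AddCommGroup N] [Module A N] (h : ModInj A M N) (p : Submodule A N) :
    ModInj A M ↥p := by
  intro K f
  let e := Submodule.equivMapOfInjective p.subtype p.injective_subtype K
  obtain ⟨g, hg⟩ := h (K.map p.subtype) (f ∘ₗ e.symm.toLinearMap)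
  refine ⟨g ∘ₗ p.subtype, fun x => ?_⟩
  have h1 := hg (e x)
  have h2 : ((e x : ↥(K.map p.subtype)) : N) = p.subtype (x : ↥p) :=
    Submodule.coe_equivMapOfInjective_apply _ _ _ _
  rw [LinearMap.comp_apply] at h1 ⊢
  rw [h2] at h1
  simpa using h1

end aux

set_option maxHeartbeats 1000000
set_option synthInstance.maxHeartbeats 400000

theorem stmt8_aux (A : Type u) [Ring A] [IsArtinian A A]
    (hlin : ∀ (M N : Type u) [AddCommGroup M] [Module A M] [AddCommGroup N] [Module A N],
      (∀ (X : Type u) [AddCommGroup X] [Module A X], ModInj A M X → ModInj A N X) ∨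
      (∀ (X : Type u) [AddCommGroup X] [Module A X], ModInj A N X → ModInj A M X))
    (K : Type u) [AddCommGroup K] [Module A K]
    (hK : ¬ ∀ (N : Type u) [AddCommGroup N] [Module A N],
      ModInj A K N ↔ IsSemisimpleModule A N) :
    ∃ C : ModuleCat.{u} A,
      (∃ c : C, Submodule.span A {c} = ⊤) ∧
      (∀ (N : Type u) [AddCommGroup N] [Module A N],
        ModInj A C N → ModInj A K N) ∧
      (∃ N : ModuleCat.{u} A, ModInj A K N ∧ ¬ ModInj A C N) := by
  classical
  -- Step 1: there exists a nonsemisimple module in the injectivity domain of K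
  have h1 : ∃ (N₀ : Type u) (_ : AddCommGroup N₀) (_ : Module A N₀),
      ModInj A K N₀ ∧ ¬ IsSemisimpleModule A N₀ := by
    by_contra h
    push_neg at h
    apply hK
    intro N iN mN
    constructor
    · intro hi
      by_contra hs
      exact hs (h N iN mN hi)
    · intro hs
      exact modInj_of_semisimple K N
  obtain ⟨N₀, iN₀, mN₀, hKN₀, hN₀ss⟩ := h1
  -- Step 2: a cyclic nonsemisimple submodule of N₀
  have hx : ∃ x : N₀, ¬ IsSemisimpleModule A
      ↥(Submodule.span A ({x} : Set N₀)) := by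
    by_contra h
    push_neg at h
    refine hN₀ss (isSemisimpleModule_of_isSemisimpleModule_submodule'
      (p := fun x : N₀ => Submodule.span A {x}) h ?_)
    rw [eq_top_iff]
    intro y _
    exact Submodule.mem_iSup_of_mem y (Submodule.mem_span_singleton_self y)
  obtain ⟨x, hxss⟩ := hx
  set C₀ : Submodule A N₀ := Submodule.span A ({x} : Set N₀) with hC₀
  -- C₀ is an artinian module (cyclic over an artinian ring)
  haveI hart : IsArtinian A ↥C₀ := by
    have hmem : ∀ r : A, r • x ∈ C₀ :=
      fun r => Submodule.smul_mem _ r (Submodule.mem_span_singleton_self x)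
    let f : A →ₗ[A] ↥C₀ :=
      (LinearMap.toSpanSingleton A N₀ x).codRestrict C₀ (fun r => by
        simpa using hmem r)
    have hsurj : Function.Surjective f := by
      rintro ⟨y, hy⟩
      rw [hC₀, Submodule.mem_span_singleton] at hy
      obtain ⟨r, hr⟩ := hy
      exact ⟨r, Subtype.ext (by simpa [f] using hr)⟩
    exact isArtinian_of_surjective A f hsurj
  -- Step 3: minimal nonsemisimple submodule D of C₀
  have htopns : ¬ IsSemisimpleModule A ↥(⊤ : Submodule A ↥C₀) := by
    intro h
    exact hxss (IsSemisimpleModule.congr (N := ↥C₀)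
      (M := ↥(⊤ : Submodule A ↥C₀)) Submodule.topEquiv.symm)
  obtain ⟨D, hDns, hDmin⟩ := IsArtinian.set_has_minimal
    {p : Submodule A ↥C₀ | ¬ IsSemisimpleModule A ↥p} ⟨⊤, htopns⟩
  simp only [Set.mem_setOf_eq] at hDns
  -- every proper submodule of D is semisimple
  have hproper : ∀ p : Submodule A ↥D, p ≠ ⊤ → IsSemisimpleModule A ↥p := by
    intro p hp
    by_contra hps
    have hlt : p.map D.subtype < D := by
      refine lt_of_le_of_ne (Submodule.map_subtype_le D p) ?_
      intro he
      apply hp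
      have : p.map D.subtype = (⊤ : Submodule A ↥D).map D.subtype := by
        rw [Submodule.map_subtype_top, he]
      exact Submodule.map_injective_of_injective D.injective_subtype this
    have hmem : p.map D.subtype ∈ {p : Submodule A ↥C₀ |
        ¬ IsSemisimpleModule A ↥p} := by
      intro h
      haveI := h
      exact hps (IsSemisimpleModule.congr (N := ↥p) (M := ↥(p.map D.subtype))
        (Submodule.equivMapOfInjective D.subtype D.injective_subtype p))
    exact hDmin _ hmem hlt
  -- Step 4: a simple submodule S of D
  have hatomic : IsAtomic (Submodule A ↥D) :=
    isAtomic_of_orderBot_wellFounded_lt (IsWellFounded.wf)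
  have hDne : (⊤ : Submodule A ↥D) ≠ ⊥ := by
    intro h
    apply hDns
    refine IsSemisimpleModule.of_sSup_simples_eq_top ?_
    refine le_antisymm le_top ?_
    rw [h]
    exact bot_le
  obtain ⟨S, hS⟩ := (hatomic.eq_bot_or_exists_atom_le ⊤).resolve_left hDne
  obtain ⟨hSatom, -⟩ := hS
  have hSsimple : IsSimpleModule A ↥S := isSimpleModule_iff_isAtom.mpr hSatom
  -- Step 5: S is not D-injective
  have hSD : ¬ ModInj A ↥S ↥D := by
    intro h
    obtain ⟨g, hg⟩ := h S LinearMap.id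
    have hkerne : LinearMap.ker g ≠ ⊤ := by
      intro hker
      apply hSatom.1
      rw [eq_bot_iff]
      intro s hs
      have h0 : g s = 0 := by
        have : s ∈ LinearMap.ker g := by rw [hker]; trivial
        exact this
      have h1 := hg ⟨s, hs⟩
      rw [h0] at h1
      have h2 : (⟨s, hs⟩ : ↥S) = 0 := h1.symm
      have h3 := congrArg Subtype.val h2
      simpa using h3
    have hsup : S ⊔ LinearMap.ker g = ⊤ := by
      rw [eq_top_iff]
      intro y _
      have h1 : ((g y : ↥S) : ↥D) ∈ S := (g y).2
      have h2 : y - ((g y : ↥S) : ↥D) ∈ LinearMap.ker g := by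
        rw [LinearMap.mem_ker, map_sub]
        rw [hg (g y)]
        simp
      have hy : y = ((g y : ↥S) : ↥D) + (y - ((g y : ↥S) : ↥D)) := by abel
      rw [hy]
      exact Submodule.add_mem_sup h1 h2
    apply hDns
    haveI hS2 : IsSemisimpleModule A ↥S := inferInstance
    have hker2 : IsSemisimpleModule A ↥(LinearMap.ker g) := hproper _ hkerne
    refine isSemisimpleModule_of_isSemisimpleModule_submodule'
      (p := fun b : Bool => if b then S else LinearMap.ker g) ?_ ?_
    · rintro (_|_) <;> simpa
    · rw [iSup_bool_eq]
      simpa using hsup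
  -- K is D-injective
  have hKD : ModInj A K ↥D := modInj_submodule (modInj_submodule hKN₀ C₀) D
  -- Step 6: by linearity, dom(S) ⊆ dom(K)
  have hdom : ∀ (X : Type u) [AddCommGroup X] [Module A X],
      ModInj A ↥S X → ModInj A K X := by
    rcases hlin K ↥S with h | h
    · exact absurd (h ↥D hKD) hSD
    · exact h
  -- Step 7: S is cyclic
  have : Nontrivial ↥S := (Submodule.nontrivial_iff_ne_bot).mpr hSatom.1
  obtain ⟨s, hs⟩ := exists_ne (0 : ↥S)
  have hcyc : Submodule.span A ({s} : Set ↥S) = ⊤ := by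
    haveI := hSsimple.toIsSimpleOrder
    rcases (IsSimpleOrder.eq_bot_or_eq_top (Submodule.span A ({s} : Set ↥S))) with h | h
    · exfalso
      apply hs
      have hmem : s ∈ Submodule.span A ({s} : Set ↥S) :=
        Submodule.mem_span_singleton_self s
      rw [h] at hmem
      simpa using hmem
    · exact h
  refine ⟨ModuleCat.of A ↥S, ⟨s, hcyc⟩, hdom, ModuleCat.of A ↥D, hKD, hSD⟩

/-- if `R` is right artinian, not semisimple, and its right i-profile is
linearly ordered, then for every right module `K` that is not i-poor there is a cyclic
module `C` whose injectivity domain is strictly contained in that of `K`. -/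
theorem stmt_8 (R : Type u) [Ring R] [IsArtinianRing Rᵐᵒᵖ]
    (hns : ¬ IsSemisimpleRing Rᵐᵒᵖ) (hlin : IProfileLinear R)
    (K : Type u) [AddCommGroup K] [Module Rᵐᵒᵖ K]
    (hK : ¬ ∀ (N : Type u) [AddCommGroup N] [Module Rᵐᵒᵖ N],
      ModInj Rᵐᵒᵖ K N ↔ IsSemisimpleModule Rᵐᵒᵖ N) :
    ∃ C : ModuleCat.{u} Rᵐᵒᵖ,
      (∃ c : C, Submodule.span Rᵐᵒᵖ {c} = ⊤) ∧
      (∀ (N : Type u) [AddCommGroup N] [Module Rᵐᵒᵖ N],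
        ModInj Rᵐᵒᵖ C N → ModInj Rᵐᵒᵖ K N) ∧
      (∃ N : ModuleCat.{u} Rᵐᵒᵖ, ModInj Rᵐᵒᵖ K N ∧ ¬ ModInj Rᵐᵒᵖ C N) := by
  exact stmt8_aux Rᵐᵒᵖ hlin K hK
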